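/- Under the continuity assumption on P^0, for every t ≥ 0 and every continuous bounded function f : X^0 × P(X×U) → ℝ, the joint law of the environment state and empirical state-action distribution in the N-agent system converges to the joint law of the mean-field environment state and mean-field state-action distribution, uniformly over all mean-field policies: sup_{π∈Π} |E[f(x^{0,N}_t, G^N_t)] − E[f(x^0_t, G(μ0, π_t(x^0_t)))]| → 0 as N → ∞. -/

import Mathlib

open Finset Filter Topology

section MFC

variable {X U X0 : Type*} [Fintype X] [Fintype U] [Fintype X0]

/-- The state-action distribution `G(μ,h)(x,u) = h(x)(u)·μ(x)` induced by a state
distribution `μ` and a decision rule `h ∈ 𝓗 = {h : X → 𝒫(U)}`. -/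
noncomputable def jointG (μ : ↥(stdSimplex ℝ X)) (h : X → ↥(stdSimplex ℝ U)) :
    ↥(stdSimplex ℝ (X × U)) :=
  ⟨fun p => (h p.1).1 p.2 * μ.1 p.1,
   ⟨fun p => mul_nonneg ((h p.1).2.1 p.2) (μ.2.1 p.1), by
    calc ∑ p : X × U, (h p.1).1 p.2 * μ.1 p.1
        = ∑ x : X, ∑ u : U, (h x).1 u * μ.1 x := by rw [Fintype.sum_prod_type]
      _ = ∑ x : X, (∑ u : U, (h x).1 u) * μ.1 x := by
          simp [Finset.sum_mul]
      _ = 1 := by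
          simp only [fun x : X => (h x).2.2, one_mul]
          exact μ.2.2⟩⟩

/-- The (deterministic) empirical state-action distribution of the `N+1` sampled
state-action pairs `s i ∈ X × U`. -/
noncomputable def empDist [DecidableEq X] [DecidableEq U] (N : ℕ) (s : Fin (N + 1) → X × U) :
    ↥(stdSimplex ℝ (X × U)) :=
  ⟨fun p => (∑ i, if s i = p then (1 : ℝ) else 0) / (N + 1),
   ⟨fun p => div_nonneg (Finset.sum_nonneg fun i _ => by positivity) (by positivity), by
    rw [← Finset.sum_div, Finset.sum_comm]
    simp only [Finset.sum_ite_eq, Finset.mem_univ, if_true, Finset.sum_const,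
      Finset.card_univ, Fintype.card_fin, nsmul_eq_mul, mul_one]
    rw [Nat.cast_add, Nat.cast_one, div_self (by positivity)]⟩⟩

/-- The probability that the `N+1` agents, with states drawn i.i.d. from `μ0` and actions
drawn conditionally independently from the decision rules `d i`, sample exactly the
state-action pairs `s i`. -/
noncomputable def sampleWeight (N : ℕ) (μ0 : ↥(stdSimplex ℝ X))
    (d : Fin (N + 1) → X → ↥(stdSimplex ℝ U)) (s : Fin (N + 1) → X × U) : ℝ :=
  ∏ i, μ0.1 (s i).1 * (d i (s i).1).1 (s i).2

/-- The expectation `E[f(𝔾^N)]` of a function `f` of the random empirical state-action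
distribution `𝔾^N ~ 𝒢^N(μ0, (d¹,…,d^{N+1}))`. -/
noncomputable def empExp [DecidableEq X] [DecidableEq U] (N : ℕ) (μ0 : ↥(stdSimplex ℝ X))
    (d : Fin (N + 1) → X → ↥(stdSimplex ℝ U))
    (f : ↥(stdSimplex ℝ (X × U)) → ℝ) : ℝ :=
  ∑ s : Fin (N + 1) → X × U, sampleWeight N μ0 d s * f (empDist N s)

/-- The law of the environment state `x^{0,N}_t` of the `(N+1)`-agent system under the
policy tuple `πv`, with agent states resampled i.i.d. from `μ0` at every step. -/
noncomputable def envLawN [DecidableEq X] [DecidableEq U] (N : ℕ) (μ0 : ↥(stdSimplex ℝ X))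
    (μ00 : ↥(stdSimplex ℝ X0))
    (P0 : X0 → ↥(stdSimplex ℝ (X × U)) → ↥(stdSimplex ℝ X0))
    (πv : Fin (N + 1) → ℕ → X0 → X → ↥(stdSimplex ℝ U)) : ℕ → X0 → ℝ
  | 0 => fun y => μ00.1 y
  | t + 1 => fun y => ∑ x0 : X0, envLawN N μ0 μ00 P0 πv t x0 *
      empExp N μ0 (fun i => πv i t x0) (fun G => (P0 x0 G).1 y)

/-- The `(N+1)`-agent objective `J^N(π¹,…,π^{N+1}) = E[∑ₜ γᵗ r(x^{0,N}_t, 𝔾^N_t)]`. -/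
noncomputable def JN [DecidableEq X] [DecidableEq U] (N : ℕ) (μ0 : ↥(stdSimplex ℝ X))
    (μ00 : ↥(stdSimplex ℝ X0))
    (P0 : X0 → ↥(stdSimplex ℝ (X × U)) → ↥(stdSimplex ℝ X0))
    (r : X0 → ↥(stdSimplex ℝ (X × U)) → ℝ) (γ : ℝ)
    (πv : Fin (N + 1) → ℕ → X0 → X → ↥(stdSimplex ℝ U)) : ℝ :=
  ∑' t : ℕ, γ ^ t * ∑ x0 : X0, envLawN N μ0 μ00 P0 πv t x0 *
      empExp N μ0 (fun i => πv i t x0) (fun G => r x0 G)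

/-- The law of the mean-field environment state `x^0_t` under the mean-field policy `π`. -/
noncomputable def envLawMF (μ0 : ↥(stdSimplex ℝ X)) (μ00 : ↥(stdSimplex ℝ X0))
    (P0 : X0 → ↥(stdSimplex ℝ (X × U)) → ↥(stdSimplex ℝ X0))
    (π : ℕ → X0 → X → ↥(stdSimplex ℝ U)) : ℕ → X0 → ℝ
  | 0 => fun y => μ00.1 y
  | t + 1 => fun y => ∑ x0 : X0, envLawMF μ0 μ00 P0 π t x0 *
      (P0 x0 (jointG μ0 (π t x0))).1 y

/-- The mean-field objective `J(π) = E[∑ₜ γᵗ r(x^0_t, G(μ0, π_t(x^0_t)))]`. -/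
noncomputable def JMF (μ0 : ↥(stdSimplex ℝ X)) (μ00 : ↥(stdSimplex ℝ X0))
    (P0 : X0 → ↥(stdSimplex ℝ (X × U)) → ↥(stdSimplex ℝ X0))
    (r : X0 → ↥(stdSimplex ℝ (X × U)) → ℝ) (γ : ℝ)
    (π : ℕ → X0 → X → ↥(stdSimplex ℝ U)) : ℝ :=
  ∑' t : ℕ, γ ^ t * ∑ x0 : X0, envLawMF μ0 μ00 P0 π t x0 * r x0 (jointG μ0 (π t x0))

end MFC
set_option linter.unusedSectionVars false

section Aux

variable {A : Type*} [Fintype A] [DecidableEq A]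

private lemma sum_pi_prod (n : ℕ) (F : Fin n → A → ℝ) :
    ∑ s : Fin n → A, ∏ i, F i (s i) = ∏ i, ∑ a, F i a := by
  rw [Finset.prod_univ_sum, Fintype.piFinset_univ]

private lemma marg_one {n : ℕ} (ν : A → ℝ) (hν1 : ∑ a, ν a = 1) (i0 : Fin n) (g : A → ℝ) :
    ∑ s : Fin n → A, (∏ i, ν (s i)) * g (s i0) = ∑ a, ν a * g a := by
  have h1 : ∀ s : Fin n → A, (∏ i, ν (s i)) * g (s i0)
      = ∏ i, (ν (s i) * if i = i0 then g (s i) else 1) := by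
    intro s
    rw [Finset.prod_mul_distrib, Finset.prod_ite_eq']
    simp
  rw [Finset.sum_congr rfl fun s _ => h1 s,
    sum_pi_prod n (fun i a => ν a * if i = i0 then g a else 1)]
  have h2 : ∀ i : Fin n, (∑ a, ν a * if i = i0 then g a else 1)
      = if i = i0 then ∑ a, ν a * g a else 1 := by
    intro i
    by_cases h : i = i0 <;> simp [h, hν1]
  rw [Finset.prod_congr rfl fun i _ => h2 i, Finset.prod_ite_eq']
  simp

private lemma prod_two_ite {n : ℕ} {i0 j0 : Fin n} (hij : i0 ≠ j0) (Aq Bq : Fin n → ℝ) :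
    (∏ i, if i = i0 then Aq i else if i = j0 then Bq i else 1) = Aq i0 * Bq j0 := by
  rw [← Finset.mul_prod_erase Finset.univ _ (Finset.mem_univ i0),
    ← Finset.mul_prod_erase _ _ (Finset.mem_erase.mpr ⟨Ne.symm hij, Finset.mem_univ j0⟩)]
  have h1 : (if i0 = i0 then Aq i0 else if i0 = j0 then Bq i0 else 1) = Aq i0 := by simp
  have h2 : (if j0 = i0 then Aq j0 else if j0 = j0 then Bq j0 else 1) = Bq j0 := by
    simp [Ne.symm hij]
  rw [h1, h2, Finset.prod_eq_one, mul_one]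
  intro i hi
  simp only [Finset.mem_erase] at hi
  simp [hi.1, hi.2.1]

private lemma marg_two {n : ℕ} (ν : A → ℝ) (hν1 : ∑ a, ν a = 1) {i0 j0 : Fin n}
    (hij : i0 ≠ j0) (g g' : A → ℝ) :
    ∑ s : Fin n → A, (∏ i, ν (s i)) * (g (s i0) * g' (s j0))
      = (∑ a, ν a * g a) * (∑ a, ν a * g' a) := by
  have h1 : ∀ s : Fin n → A, (∏ i, ν (s i)) * (g (s i0) * g' (s j0))
      = ∏ i, (ν (s i) * if i = i0 then g (s i) else if i = j0 then g' (s i) else 1) := by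
    intro s
    rw [Finset.prod_mul_distrib, prod_two_ite hij]
  rw [Finset.sum_congr rfl fun s _ => h1 s,
    sum_pi_prod n (fun i a => ν a * if i = i0 then g a else if i = j0 then g' a else 1)]
  have h2 : ∀ i : Fin n, (∑ a, ν a * if i = i0 then g a else if i = j0 then g' a else 1)
      = if i = i0 then ∑ a, ν a * g a else if i = j0 then ∑ a, ν a * g' a else 1 := by
    intro i
    by_cases h : i = i0 <;> by_cases h' : i = j0 <;> simp [h, h', hν1]
  rw [Finset.prod_congr rfl fun i _ => h2 i, prod_two_ite hij]

end Aux
section Aux2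

variable {A : Type*} [Fintype A] [DecidableEq A]

private lemma var_bound (n : ℕ) (ν : A → ℝ) (hν0 : ∀ a, 0 ≤ ν a) (hν1 : ∑ a, ν a = 1)
    (p : A) :
    ∑ s : Fin (n + 1) → A, (∏ i, ν (s i)) *
      ((∑ i, if s i = p then (1 : ℝ) else 0) / ((n : ℝ) + 1) - ν p) ^ 2
      ≤ ν p / ((n : ℝ) + 1) := by
  set q : ℝ := ν p with hq
  set B : A → ℝ := fun a => if a = p then (1 : ℝ) else 0 with hB
  have hn : (0 : ℝ) < (n : ℝ) + 1 := by positivity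
  have hq0 : 0 ≤ q := hν0 p
  have hq1 : q ≤ 1 := by
    rw [← hν1]
    exact Finset.single_le_sum (fun a _ => hν0 a) (Finset.mem_univ p)
  have hsumB : ∑ a, ν a * B a = q := by
    simp [hB, mul_ite]
    exact hq.symm
  have e1 : ∀ s : Fin (n + 1) → A,
      ((∑ i, B (s i)) / ((n : ℝ) + 1) - q) ^ 2
        = (∑ i, ∑ j, (B (s i) - q) * (B (s j) - q)) / (((n : ℝ) + 1) ^ 2) := by
    intro s
    have h0 : (∑ i, B (s i)) / ((n : ℝ) + 1) - q = (∑ i, (B (s i) - q)) / ((n : ℝ) + 1) := by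
      rw [Finset.sum_sub_distrib, Finset.sum_const, Finset.card_univ, Fintype.card_fin, nsmul_eq_mul]
      push_cast
      field_simp
    rw [h0, div_pow, sq, Finset.sum_mul_sum]
  have key : ∀ i j : Fin (n + 1),
      ∑ s : Fin (n + 1) → A, (∏ k, ν (s k)) * ((B (s i) - q) * (B (s j) - q))
        = if i = j then q - q ^ 2 else 0 := by
    intro i j
    by_cases hij : i = j
    · subst hij
      rw [if_pos rfl, marg_one ν hν1 i (fun a => (B a - q) * (B a - q))]
      have hterm : ∀ a, ν a * ((B a - q) * (B a - q)) = ν a * B a * (1 - 2 * q) + ν a * q ^ 2 := by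
        intro a
        by_cases h : a = p
        · simp only [hB]; rw [if_pos h]; ring
        · simp only [hB]; rw [if_neg h]; ring
      rw [Finset.sum_congr rfl fun a _ => hterm a, Finset.sum_add_distrib,
        ← Finset.sum_mul, hsumB, ← Finset.sum_mul, hν1]
      ring
    · rw [if_neg hij, marg_two ν hν1 hij (fun a => B a - q) (fun a => B a - q)]
      have h0 : ∑ a, ν a * (B a - q) = 0 := by
        have hterm : ∀ a, ν a * (B a - q) = ν a * B a - ν a * q := fun a => by ring
        rw [Finset.sum_congr rfl fun a _ => hterm a, Finset.sum_sub_distrib, hsumB,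
          ← Finset.sum_mul, hν1]
        ring
      rw [h0, zero_mul]
  have e2 : ∑ s : Fin (n + 1) → A,
        ((∏ i, ν (s i)) * (∑ i, ∑ j, (B (s i) - q) * (B (s j) - q)))
      = ∑ i : Fin (n + 1), ∑ j : Fin (n + 1), ∑ s : Fin (n + 1) → A,
        (∏ k, ν (s k)) * ((B (s i) - q) * (B (s j) - q)) := by
    simp_rw [Finset.mul_sum]
    rw [Finset.sum_comm]
    exact Finset.sum_congr rfl fun i _ => Finset.sum_comm
  calc ∑ s : Fin (n + 1) → A, (∏ i, ν (s i)) *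
        ((∑ i, if s i = p then (1 : ℝ) else 0) / ((n : ℝ) + 1) - q) ^ 2
      = (∑ i : Fin (n + 1), ∑ j : Fin (n + 1),
          ∑ s : Fin (n + 1) → A, (∏ k, ν (s k)) * ((B (s i) - q) * (B (s j) - q)))
          / (((n : ℝ) + 1) ^ 2) := by
        have e3 : ∀ s : Fin (n + 1) → A, (∏ i, ν (s i)) *
            ((∑ i, if s i = p then (1 : ℝ) else 0) / ((n : ℝ) + 1) - q) ^ 2
            = ((∏ i, ν (s i)) * (∑ i, ∑ j, (B (s i) - q) * (B (s j) - q))) / (((n : ℝ) + 1) ^ 2) := by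
          intro s
          rw [show ((∑ i, if s i = p then (1 : ℝ) else 0) / ((n : ℝ) + 1) - q) ^ 2
              = ((∑ i, B (s i)) / ((n : ℝ) + 1) - q) ^ 2 from rfl, e1 s, mul_div_assoc]
        rw [Finset.sum_congr rfl fun s _ => e3 s, ← Finset.sum_div, e2]
      _ = ((n : ℝ) + 1) * (q - q ^ 2) / (((n : ℝ) + 1) ^ 2) := by
        rw [Finset.sum_congr rfl fun i _ => Finset.sum_congr rfl fun j _ => key i j]
        simp [Finset.sum_ite_eq]
        ring
      _ = (q - q ^ 2) / ((n : ℝ) + 1) := by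
        rw [sq ((n : ℝ) + 1), mul_div_mul_left _ _ (ne_of_gt hn)]
      _ ≤ q / ((n : ℝ) + 1) := by
        gcongr
        nlinarith [sq_nonneg q]

end Aux2
section Aux3

variable {X U : Type*} [Fintype X] [Fintype U] [DecidableEq X] [DecidableEq U]

private noncomputable def nuD (μ0 : ↥(stdSimplex ℝ X)) (h : X → ↥(stdSimplex ℝ U)) :
    X × U → ℝ := fun a => μ0.1 a.1 * (h a.1).1 a.2

private lemma nuD_nonneg (μ0 : ↥(stdSimplex ℝ X)) (h : X → ↥(stdSimplex ℝ U)) (a : X × U) :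
    0 ≤ nuD μ0 h a := mul_nonneg (μ0.2.1 a.1) ((h a.1).2.1 a.2)

private lemma nuD_sum (μ0 : ↥(stdSimplex ℝ X)) (h : X → ↥(stdSimplex ℝ U)) :
    ∑ a, nuD μ0 h a = 1 := by
  rw [Fintype.sum_prod_type]
  have : ∀ x : X, ∑ u : U, nuD μ0 h (x, u) = μ0.1 x := by
    intro x
    rw [show (∑ u : U, nuD μ0 h (x, u)) = μ0.1 x * ∑ u : U, (h x).1 u by
      rw [Finset.mul_sum]; rfl]
    rw [(h x).2.2, mul_one]
  rw [Finset.sum_congr rfl fun x _ => this x]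
  exact μ0.2.2

private lemma sampleWeight_eq (N : ℕ) (μ0 : ↥(stdSimplex ℝ X)) (h : X → ↥(stdSimplex ℝ U))
    (s : Fin (N + 1) → X × U) :
    sampleWeight N μ0 (fun _ => h) s = ∏ i, nuD μ0 h (s i) := rfl

private lemma sampleWeight_nonneg (N : ℕ) (μ0 : ↥(stdSimplex ℝ X))
    (d : Fin (N + 1) → X → ↥(stdSimplex ℝ U)) (s : Fin (N + 1) → X × U) :
    0 ≤ sampleWeight N μ0 d s :=
  Finset.prod_nonneg fun i _ => mul_nonneg (μ0.2.1 _) ((d i _).2.1 _)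

private lemma sampleWeight_sum (N : ℕ) (μ0 : ↥(stdSimplex ℝ X)) (h : X → ↥(stdSimplex ℝ U)) :
    ∑ s : Fin (N + 1) → X × U, sampleWeight N μ0 (fun _ => h) s = 1 := by
  rw [Finset.sum_congr rfl fun s _ => sampleWeight_eq N μ0 h s,
    sum_pi_prod (N + 1) (fun _ a => nuD μ0 h a)]
  simp [nuD_sum μ0 h]

private lemma jointG_val (μ0 : ↥(stdSimplex ℝ X)) (h : X → ↥(stdSimplex ℝ U)) (p : X × U) :
    (jointG μ0 h).1 p = nuD μ0 h p := mul_comm _ _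

private lemma empDist_val (N : ℕ) (s : Fin (N + 1) → X × U) (p : X × U) :
    (empDist N s).1 p = (∑ i, if s i = p then (1 : ℝ) else 0) / ((N : ℝ) + 1) := rfl

private lemma empExp_abs_le (N : ℕ) (μ0 : ↥(stdSimplex ℝ X)) (h : X → ↥(stdSimplex ℝ U))
    (g : ↥(stdSimplex ℝ (X × U)) → ℝ) {C : ℝ} (hC : ∀ G, |g G| ≤ C) :
    |empExp N μ0 (fun _ => h) g| ≤ C := by
  calc |empExp N μ0 (fun _ => h) g|
      ≤ ∑ s : Fin (N + 1) → X × U, |sampleWeight N μ0 (fun _ => h) s * g (empDist N s)| :=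
        Finset.abs_sum_le_sum_abs _ _
    _ ≤ ∑ s : Fin (N + 1) → X × U, sampleWeight N μ0 (fun _ => h) s * C := by
        refine Finset.sum_le_sum fun s _ => ?_
        rw [abs_mul, abs_of_nonneg (sampleWeight_nonneg N μ0 _ s)]
        exact mul_le_mul_of_nonneg_left (hC _) (sampleWeight_nonneg N μ0 _ s)
    _ = C := by rw [← Finset.sum_mul, sampleWeight_sum, one_mul]

private lemma empExp_nonneg (N : ℕ) (μ0 : ↥(stdSimplex ℝ X)) (h : X → ↥(stdSimplex ℝ U))
    (g : ↥(stdSimplex ℝ (X × U)) → ℝ) (hg : ∀ G, 0 ≤ g G) :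
    0 ≤ empExp N μ0 (fun _ => h) g :=
  Finset.sum_nonneg fun s _ => mul_nonneg (sampleWeight_nonneg N μ0 _ s) (hg _)

/-- The key uniform law of large numbers estimate. -/
private lemma empExp_close (μ0 : ↥(stdSimplex ℝ X)) (g : ↥(stdSimplex ℝ (X × U)) → ℝ)
    (hg : Continuous g) {ε : ℝ} (hε : 0 < ε) :
    ∀ᶠ N : ℕ in Filter.atTop, ∀ h : X → ↥(stdSimplex ℝ U),
      |empExp N μ0 (fun _ => h) g - g (jointG μ0 h)| ≤ ε := by
  haveI : CompactSpace ↥(stdSimplex ℝ (X × U)) :=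
    isCompact_iff_compactSpace.mp (isCompact_stdSimplex ℝ _)
  obtain ⟨C, hC⟩ := (isCompact_range hg.abs).bddAbove
  set C' : ℝ := max C 0 with hC'
  have hC'0 : 0 ≤ C' := le_max_right _ _
  have hgb : ∀ G, |g G| ≤ C' := fun G =>
    le_trans (hC ⟨G, rfl⟩) (le_max_left _ _)
  obtain ⟨δ, hδ, hmod⟩ := Metric.uniformContinuous_iff.mp
    (CompactSpace.uniformContinuous_of_continuous hg) (ε / 2) (by linarith)
  have htail : Filter.Tendsto (fun N : ℕ => (2 * C' / δ ^ 2) / ((N : ℝ) + 1))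
      Filter.atTop (𝓝 0) := by
    have h1 := (tendsto_const_div_atTop_nhds_zero_nat (2 * C' / δ ^ 2)).comp
      (tendsto_add_atTop_nat 1)
    have h2 : (fun N : ℕ => (2 * C' / δ ^ 2) / ((N : ℝ) + 1))
        = (fun n : ℕ => (2 * C' / δ ^ 2) / (n : ℝ)) ∘ (fun a => a + 1) := by
      funext N
      simp only [Function.comp_apply]
      push_cast
      ring
    rw [h2]
    exact h1
  have hev : ∀ᶠ N : ℕ in Filter.atTop, (2 * C' / δ ^ 2) / ((N : ℝ) + 1) < ε / 2 :=
    Filter.Tendsto.eventually_lt_const (by linarith) htail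
  filter_upwards [hev] with N hN h
  set ν : X × U → ℝ := nuD μ0 h with hν
  have hν0 := nuD_nonneg μ0 h
  have hν1 := nuD_sum μ0 h
  -- pointwise estimate
  have hptw : ∀ s : Fin (N + 1) → X × U,
      |g (empDist N s) - g (jointG μ0 h)| ≤
        ε / 2 + (2 * C' / δ ^ 2) * ∑ p, ((empDist N s).1 p - (jointG μ0 h).1 p) ^ 2 := by
    intro s
    have hsq : 0 ≤ ∑ p, ((empDist N s).1 p - (jointG μ0 h).1 p) ^ 2 :=
      Finset.sum_nonneg fun p _ => sq_nonneg _
    have hc0 : 0 ≤ 2 * C' / δ ^ 2 := by positivity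
    by_cases hd : dist (empDist N s) (jointG μ0 h) < δ
    · have h1 : dist (g (empDist N s)) (g (jointG μ0 h)) < ε / 2 := hmod hd
      rw [Real.dist_eq] at h1
      nlinarith [mul_nonneg hc0 hsq]
    · push_neg at hd
      have hp0 : ∃ p, δ ≤ |(empDist N s).1 p - (jointG μ0 h).1 p| := by
        by_contra hcon
        push_neg at hcon
        refine absurd ?_ (not_lt.mpr hd)
        rw [Subtype.dist_eq]
        exact (dist_pi_lt_iff hδ).mpr fun p => by rw [Real.dist_eq]; exact hcon p
      obtain ⟨p0, hp0⟩ := hp0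
      have hsq2 : δ ^ 2 ≤ ∑ p, ((empDist N s).1 p - (jointG μ0 h).1 p) ^ 2 := by
        refine le_trans ?_ (Finset.single_le_sum (fun p _ => sq_nonneg _) (Finset.mem_univ p0))
        calc δ ^ 2 ≤ |(empDist N s).1 p0 - (jointG μ0 h).1 p0| ^ 2 := by
              exact pow_le_pow_left₀ hδ.le hp0 2
          _ = ((empDist N s).1 p0 - (jointG μ0 h).1 p0) ^ 2 := sq_abs _
      have hgd : |g (empDist N s) - g (jointG μ0 h)| ≤ 2 * C' := by
        have h1 := hgb (empDist N s)
        have h2 := hgb (jointG μ0 h)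
        have := abs_sub (g (empDist N s)) (g (jointG μ0 h))
        linarith [abs_sub_abs_le_abs_sub (g (empDist N s)) (g (jointG μ0 h))]
      have h3 : 2 * C' ≤ (2 * C' / δ ^ 2) * ∑ p, ((empDist N s).1 p - (jointG μ0 h).1 p) ^ 2 := by
        calc 2 * C' = (2 * C' / δ ^ 2) * δ ^ 2 := by field_simp
          _ ≤ _ := mul_le_mul_of_nonneg_left hsq2 hc0
      linarith
  -- expectation estimate
  have hvar : ∀ p : X × U,
      ∑ s : Fin (N + 1) → X × U, sampleWeight N μ0 (fun _ => h) s *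
        ((empDist N s).1 p - (jointG μ0 h).1 p) ^ 2 ≤ ν p / ((N : ℝ) + 1) := by
    intro p
    have := var_bound N ν hν0 hν1 p
    refine le_trans (le_of_eq ?_) this
    refine Finset.sum_congr rfl fun s _ => ?_
    rw [sampleWeight_eq, empDist_val, jointG_val]
  calc |empExp N μ0 (fun _ => h) g - g (jointG μ0 h)|
      = |∑ s : Fin (N + 1) → X × U, sampleWeight N μ0 (fun _ => h) s *
          (g (empDist N s) - g (jointG μ0 h))| := by
        rw [show (∑ s : Fin (N + 1) → X × U, sampleWeight N μ0 (fun _ => h) s *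
            (g (empDist N s) - g (jointG μ0 h)))
            = empExp N μ0 (fun _ => h) g - (∑ s : Fin (N + 1) → X × U,
              sampleWeight N μ0 (fun _ => h) s) * g (jointG μ0 h) by
          rw [empExp, Finset.sum_mul, ← Finset.sum_sub_distrib]
          exact Finset.sum_congr rfl fun s _ => by ring]
        rw [sampleWeight_sum, one_mul]
    _ ≤ ∑ s : Fin (N + 1) → X × U, sampleWeight N μ0 (fun _ => h) s *
          |g (empDist N s) - g (jointG μ0 h)| := by
        refine le_trans (Finset.abs_sum_le_sum_abs _ _) (Finset.sum_le_sum fun s _ => ?_)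
        rw [abs_mul, abs_of_nonneg (sampleWeight_nonneg N μ0 _ s)]
    _ ≤ ∑ s : Fin (N + 1) → X × U, sampleWeight N μ0 (fun _ => h) s *
          (ε / 2 + (2 * C' / δ ^ 2) * ∑ p, ((empDist N s).1 p - (jointG μ0 h).1 p) ^ 2) :=
        Finset.sum_le_sum fun s _ =>
          mul_le_mul_of_nonneg_left (hptw s) (sampleWeight_nonneg N μ0 _ s)
    _ = ε / 2 + (2 * C' / δ ^ 2) * ∑ p, ∑ s : Fin (N + 1) → X × U,
          sampleWeight N μ0 (fun _ => h) s * ((empDist N s).1 p - (jointG μ0 h).1 p) ^ 2 := by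
        have e4 : ∀ s : Fin (N + 1) → X × U, sampleWeight N μ0 (fun _ => h) s *
            (ε / 2 + (2 * C' / δ ^ 2) * ∑ p, ((empDist N s).1 p - (jointG μ0 h).1 p) ^ 2)
            = sampleWeight N μ0 (fun _ => h) s * (ε / 2) + (2 * C' / δ ^ 2) *
              ∑ p, sampleWeight N μ0 (fun _ => h) s *
                ((empDist N s).1 p - (jointG μ0 h).1 p) ^ 2 := by
          intro s
          rw [show (∑ p, sampleWeight N μ0 (fun _ => h) s *
              ((empDist N s).1 p - (jointG μ0 h).1 p) ^ 2)
              = sampleWeight N μ0 (fun _ => h) s *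
                ∑ p, ((empDist N s).1 p - (jointG μ0 h).1 p) ^ 2 from
            (Finset.mul_sum _ _ _).symm]
          ring
        rw [Finset.sum_congr rfl fun s _ => e4 s, Finset.sum_add_distrib, ← Finset.sum_mul,
          sampleWeight_sum, one_mul, ← Finset.mul_sum, Finset.sum_comm]
    _ ≤ ε / 2 + (2 * C' / δ ^ 2) * ∑ p : X × U, ν p / ((N : ℝ) + 1) := by
        have hm : 0 ≤ 2 * C' / δ ^ 2 := by positivity
        have := Finset.sum_le_sum fun p (_ : p ∈ Finset.univ) => hvar p
        nlinarith
    _ ≤ ε / 2 + ε / 2 := by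
        have : ∑ p : X × U, ν p / ((N : ℝ) + 1) = 1 / ((N : ℝ) + 1) := by
          rw [← Finset.sum_div, hν1]
        rw [this]
        have h2 : (2 * C' / δ ^ 2) * (1 / ((N : ℝ) + 1)) = (2 * C' / δ ^ 2) / ((N : ℝ) + 1) := by
          ring
        rw [h2]
        linarith
    _ = ε := by ring

end Aux3
section Aux4

variable {X U X0 : Type*} [Fintype X] [Fintype U] [Fintype X0]
  [DecidableEq X] [DecidableEq U]

private lemma empExp_sum_one {Y : Type*} [Fintype Y] (N : ℕ) (μ0 : ↥(stdSimplex ℝ X))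
    (h : X → ↥(stdSimplex ℝ U)) (g : Y → ↥(stdSimplex ℝ (X × U)) → ℝ)
    (hg : ∀ G, ∑ y, g y G = 1) :
    ∑ y : Y, empExp N μ0 (fun _ => h) (g y) = 1 := by
  rw [show (∑ y : Y, empExp N μ0 (fun _ => h) (g y))
      = ∑ s : Fin (N + 1) → X × U, ∑ y : Y,
          sampleWeight N μ0 (fun _ => h) s * g y (empDist N s) from Finset.sum_comm]
  rw [Finset.sum_congr rfl fun s (_ : s ∈ Finset.univ) => by
    rw [← Finset.mul_sum, hg (empDist N s), mul_one]]
  exact sampleWeight_sum N μ0 h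

private lemma envLawMF_nonneg (μ0 : ↥(stdSimplex ℝ X)) (μ00 : ↥(stdSimplex ℝ X0))
    (P0 : X0 → ↥(stdSimplex ℝ (X × U)) → ↥(stdSimplex ℝ X0))
    (π : ℕ → X0 → X → ↥(stdSimplex ℝ U)) (t : ℕ) (x0 : X0) :
    0 ≤ envLawMF μ0 μ00 P0 π t x0 := by
  induction t generalizing x0 with
  | zero => exact μ00.2.1 x0
  | succ t ih =>
    exact Finset.sum_nonneg fun y _ => mul_nonneg (ih y) ((P0 y _).2.1 x0)

private lemma envLawMF_sum (μ0 : ↥(stdSimplex ℝ X)) (μ00 : ↥(stdSimplex ℝ X0))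
    (P0 : X0 → ↥(stdSimplex ℝ (X × U)) → ↥(stdSimplex ℝ X0))
    (π : ℕ → X0 → X → ↥(stdSimplex ℝ U)) (t : ℕ) :
    ∑ x0 : X0, envLawMF μ0 μ00 P0 π t x0 = 1 := by
  induction t with
  | zero => exact μ00.2.2
  | succ t ih =>
    show (∑ y : X0, ∑ x0 : X0, envLawMF μ0 μ00 P0 π t x0 *
        (P0 x0 (jointG μ0 (π t x0))).1 y) = 1
    rw [Finset.sum_comm]
    rw [Finset.sum_congr rfl fun x0 (_ : x0 ∈ Finset.univ) => by
      rw [← Finset.mul_sum, (P0 x0 (jointG μ0 (π t x0))).2.2, mul_one]]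
    exact ih

private lemma envLaw_close [Nonempty X0] (μ0 : ↥(stdSimplex ℝ X)) (μ00 : ↥(stdSimplex ℝ X0))
    (P0 : X0 → ↥(stdSimplex ℝ (X × U)) → ↥(stdSimplex ℝ X0))
    (hP0 : ∀ x0, Continuous (P0 x0)) (t : ℕ) :
    ∀ ε : ℝ, 0 < ε → ∀ᶠ N : ℕ in Filter.atTop,
      ∀ π : ℕ → X0 → X → ↥(stdSimplex ℝ U),
        ∑ x0 : X0, |envLawN N μ0 μ00 P0 (fun _ => π) t x0 -
          envLawMF μ0 μ00 P0 π t x0| ≤ ε := by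
  induction t with
  | zero =>
    intro ε hε
    filter_upwards with N π
    have : ∀ x0 : X0, envLawN N μ0 μ00 P0 (fun _ => π) 0 x0 -
        envLawMF μ0 μ00 P0 π 0 x0 = 0 := fun x0 => sub_self _
    simp only [this, abs_zero, Finset.sum_const_zero]
    exact hε.le
  | succ t ih =>
    intro ε hε
    have hcard : (0 : ℝ) < (Fintype.card X0 : ℝ) := by exact_mod_cast Fintype.card_pos
    have h2 : ∀ᶠ N : ℕ in Filter.atTop, ∀ x0 y : X0, ∀ h : X → ↥(stdSimplex ℝ U),
        |empExp N μ0 (fun _ => h) (fun G => (P0 x0 G).1 y) - (P0 x0 (jointG μ0 h)).1 y|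
          ≤ ε / (2 * Fintype.card X0) := by
      rw [Filter.eventually_all]
      intro x0
      rw [Filter.eventually_all]
      intro y
      have hcont : Continuous (fun G => (P0 x0 G).1 y) :=
        (continuous_apply y).comp (continuous_subtype_val.comp (hP0 x0))
      exact empExp_close μ0 (fun G => (P0 x0 G).1 y) hcont (by positivity)
    filter_upwards [ih (ε / 2) (by linarith), h2] with N hN1 hN2 π
    have hE0 : ∀ y x0 : X0, 0 ≤ empExp N μ0 (fun _ => π t x0) (fun G => (P0 x0 G).1 y) :=
      fun y x0 => empExp_nonneg _ _ _ _ fun G => (P0 x0 G).2.1 y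
    have hL0 : ∀ x0 : X0, 0 ≤ envLawMF μ0 μ00 P0 π t x0 :=
      fun x0 => envLawMF_nonneg μ0 μ00 P0 π t x0
    have hEsum : ∀ x0 : X0,
        ∑ y : X0, empExp N μ0 (fun _ => π t x0) (fun G => (P0 x0 G).1 y) = 1 :=
      fun x0 => empExp_sum_one N μ0 (π t x0) (fun y G => (P0 x0 G).1 y)
        fun G => (P0 x0 G).2.2
    have habs : ∀ y : X0,
        |envLawN N μ0 μ00 P0 (fun _ => π) (t + 1) y - envLawMF μ0 μ00 P0 π (t + 1) y|
        ≤ ∑ x0 : X0,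
          (|envLawN N μ0 μ00 P0 (fun _ => π) t x0 - envLawMF μ0 μ00 P0 π t x0| *
              empExp N μ0 (fun _ => π t x0) (fun G => (P0 x0 G).1 y)
            + envLawMF μ0 μ00 P0 π t x0 *
              |empExp N μ0 (fun _ => π t x0) (fun G => (P0 x0 G).1 y) -
                (P0 x0 (jointG μ0 (π t x0))).1 y|) := by
      intro y
      have hrw : envLawN N μ0 μ00 P0 (fun _ => π) (t + 1) y - envLawMF μ0 μ00 P0 π (t + 1) y
          = ∑ x0 : X0,
            ((envLawN N μ0 μ00 P0 (fun _ => π) t x0 - envLawMF μ0 μ00 P0 π t x0) *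
                empExp N μ0 (fun _ => π t x0) (fun G => (P0 x0 G).1 y)
              + envLawMF μ0 μ00 P0 π t x0 *
                (empExp N μ0 (fun _ => π t x0) (fun G => (P0 x0 G).1 y) -
                  (P0 x0 (jointG μ0 (π t x0))).1 y)) := by
        show (∑ x0 : X0, envLawN N μ0 μ00 P0 (fun _ => π) t x0 *
            empExp N μ0 (fun _ => π t x0) (fun G => (P0 x0 G).1 y)) -
          (∑ x0 : X0, envLawMF μ0 μ00 P0 π t x0 * (P0 x0 (jointG μ0 (π t x0))).1 y) = _
        rw [← Finset.sum_sub_distrib]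
        exact Finset.sum_congr rfl fun x0 _ => by ring
      rw [hrw]
      refine le_trans (Finset.abs_sum_le_sum_abs _ _) (Finset.sum_le_sum fun x0 _ => ?_)
      refine le_trans (abs_add_le _ _) ?_
      rw [abs_mul, abs_mul, abs_of_nonneg (hE0 y x0), abs_of_nonneg (hL0 x0)]
    have hconst : (Fintype.card X0 : ℝ) * (ε / (2 * Fintype.card X0)) = ε / 2 := by
      field_simp
    calc ∑ y : X0, |envLawN N μ0 μ00 P0 (fun _ => π) (t + 1) y -
          envLawMF μ0 μ00 P0 π (t + 1) y|
        ≤ ∑ y : X0, ∑ x0 : X0,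
          (|envLawN N μ0 μ00 P0 (fun _ => π) t x0 - envLawMF μ0 μ00 P0 π t x0| *
              empExp N μ0 (fun _ => π t x0) (fun G => (P0 x0 G).1 y)
            + envLawMF μ0 μ00 P0 π t x0 *
              |empExp N μ0 (fun _ => π t x0) (fun G => (P0 x0 G).1 y) -
                (P0 x0 (jointG μ0 (π t x0))).1 y|) := Finset.sum_le_sum fun y _ => habs y
      _ = ∑ x0 : X0,
          (|envLawN N μ0 μ00 P0 (fun _ => π) t x0 - envLawMF μ0 μ00 P0 π t x0| *
              (∑ y : X0, empExp N μ0 (fun _ => π t x0) (fun G => (P0 x0 G).1 y))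
            + envLawMF μ0 μ00 P0 π t x0 *
              ∑ y : X0, |empExp N μ0 (fun _ => π t x0) (fun G => (P0 x0 G).1 y) -
                (P0 x0 (jointG μ0 (π t x0))).1 y|) := by
          rw [Finset.sum_comm]
          exact Finset.sum_congr rfl fun x0 _ => by
            rw [Finset.sum_add_distrib, ← Finset.mul_sum, ← Finset.mul_sum]
      _ ≤ ∑ x0 : X0,
          (|envLawN N μ0 μ00 P0 (fun _ => π) t x0 - envLawMF μ0 μ00 P0 π t x0| * 1
            + envLawMF μ0 μ00 P0 π t x0 * (ε / 2)) := by
          refine Finset.sum_le_sum fun x0 _ => ?_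
          rw [hEsum x0]
          refine add_le_add le_rfl (mul_le_mul_of_nonneg_left ?_ (hL0 x0))
          calc (∑ y : X0, |empExp N μ0 (fun _ => π t x0) (fun G => (P0 x0 G).1 y) -
                (P0 x0 (jointG μ0 (π t x0))).1 y|)
              ≤ ∑ _y : X0, ε / (2 * Fintype.card X0) :=
                Finset.sum_le_sum fun y _ => hN2 x0 y (π t x0)
            _ = (Fintype.card X0 : ℝ) * (ε / (2 * Fintype.card X0)) := by
                rw [Finset.sum_const, Finset.card_univ, nsmul_eq_mul]
            _ = ε / 2 := hconst
      _ = (∑ x0 : X0, |envLawN N μ0 μ00 P0 (fun _ => π) t x0 -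
            envLawMF μ0 μ00 P0 π t x0|) +
          (∑ x0 : X0, envLawMF μ0 μ00 P0 π t x0) * (ε / 2) := by
          rw [Finset.sum_add_distrib]
          congr 1
          · exact Finset.sum_congr rfl fun x0 _ => mul_one _
          · exact (Finset.sum_mul _ _ _).symm
      _ ≤ ε / 2 + 1 * (ε / 2) := by
          rw [envLawMF_sum]
          exact add_le_add (hN1 π) le_rfl
      _ = ε := by ring

end Aux4
private lemma stdSimplex_nonempty' {ι : Type*} [Fintype ι] [Nonempty ι] :
    Nonempty ↥(stdSimplex ℝ ι) := by
  have hcard : (0 : ℝ) < (Fintype.card ι : ℝ) := by exact_mod_cast Fintype.card_pos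
  refine ⟨⟨fun _ => (Fintype.card ι : ℝ)⁻¹, fun _ => by positivity, ?_⟩⟩
  rw [Finset.sum_const, Finset.card_univ, nsmul_eq_mul, mul_inv_cancel₀ (ne_of_gt hcard)]


/-- Under the continuity assumption on `P⁰`, for every `t ≥ 0` and every
continuous bounded `f : X⁰ × 𝒫(X×U) → ℝ`, the joint law of the environment state and
empirical state-action distribution in the `N`-agent system converges to the joint law of
the mean-field environment state and mean-field state-action distribution, uniformly over
all mean-field policies:
`sup_{π∈Π} |E[f(x^{0,N}_t, 𝔾^N_t)] − E[f(x^0_t, G(μ0, π_t(x^0_t)))]| → 0` as `N → ∞`.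
(The number of agents is written as `N + 1`; the limit `N → ∞` is unaffected.) -/

theorem joint_law_tendsto_mean_field
    {X U X0 : Type*} [Fintype X] [Fintype U] [Fintype X0]
    [Nonempty X] [Nonempty U] [Nonempty X0] [DecidableEq X] [DecidableEq U]
    (μ0 : ↥(stdSimplex ℝ X)) (μ00 : ↥(stdSimplex ℝ X0))
    (P0 : X0 → ↥(stdSimplex ℝ (X × U)) → ↥(stdSimplex ℝ X0))
    -- continuity of P⁰ in the state-action distribution
    (hP0 : ∀ x0, Continuous (P0 x0))
    (t : ℕ)
    -- a continuous bounded test function f : X⁰ × 𝒫(X×U) → ℝ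
    (f : X0 → ↥(stdSimplex ℝ (X × U)) → ℝ)
    (hf : ∀ x0, Continuous (f x0)) (hfbd : ∃ C : ℝ, ∀ x0 G, |f x0 G| ≤ C) :
    Tendsto (fun N : ℕ =>
        ⨆ π : ℕ → X0 → X → ↥(stdSimplex ℝ U),
          |(∑ x0 : X0, envLawN N μ0 μ00 P0 (fun _ => π) t x0 *
              empExp N μ0 (fun _ => π t x0) (fun G => f x0 G)) -
            ∑ x0 : X0, envLawMF μ0 μ00 P0 π t x0 * f x0 (jointG μ0 (π t x0))|)
      atTop (𝓝 0) := by
  haveI : Nonempty ↥(stdSimplex ℝ U) := stdSimplex_nonempty'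
  obtain ⟨C, hC⟩ := hfbd
  set C' : ℝ := max C 0 with hC'def
  have hC'0 : 0 ≤ C' := le_max_right _ _
  have hfb' : ∀ x0 G, |f x0 G| ≤ C' := fun x0 G => le_trans (hC x0 G) (le_max_left _ _)
  rw [Metric.tendsto_atTop]
  intro ε hε
  have h1 := envLaw_close μ0 μ00 P0 hP0 t (ε / (4 * (C' + 1))) (by positivity)
  have h2 : ∀ᶠ N : ℕ in atTop, ∀ x0 : X0, ∀ h : X → ↥(stdSimplex ℝ U),
      |empExp N μ0 (fun _ => h) (f x0) - f x0 (jointG μ0 h)| ≤ ε / 4 := by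
    rw [Filter.eventually_all]
    intro x0
    exact empExp_close μ0 (f x0) (hf x0) (by positivity)
  rw [Filter.eventually_atTop] at h1 h2
  obtain ⟨N1, hN1⟩ := h1
  obtain ⟨N2, hN2⟩ := h2
  refine ⟨max N1 N2, fun N hN => ?_⟩
  have hb1 := hN1 N (le_trans (le_max_left _ _) hN)
  have hb2 := hN2 N (le_trans (le_max_right _ _) hN)
  have hub : ∀ π : ℕ → X0 → X → ↥(stdSimplex ℝ U),
      |(∑ x0 : X0, envLawN N μ0 μ00 P0 (fun _ => π) t x0 *
          empExp N μ0 (fun _ => π t x0) (fun G => f x0 G)) -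
        ∑ x0 : X0, envLawMF μ0 μ00 P0 π t x0 * f x0 (jointG μ0 (π t x0))| ≤ ε / 2 := by
    intro π
    have hmain : |(∑ x0 : X0, envLawN N μ0 μ00 P0 (fun _ => π) t x0 *
          empExp N μ0 (fun _ => π t x0) (fun G => f x0 G)) -
        ∑ x0 : X0, envLawMF μ0 μ00 P0 π t x0 * f x0 (jointG μ0 (π t x0))|
        ≤ C' * (ε / (4 * (C' + 1))) + ε / 4 := by
      have hrw : (∑ x0 : X0, envLawN N μ0 μ00 P0 (fun _ => π) t x0 *
            empExp N μ0 (fun _ => π t x0) (fun G => f x0 G)) -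
          (∑ x0 : X0, envLawMF μ0 μ00 P0 π t x0 * f x0 (jointG μ0 (π t x0)))
          = ∑ x0 : X0,
            ((envLawN N μ0 μ00 P0 (fun _ => π) t x0 - envLawMF μ0 μ00 P0 π t x0) *
                empExp N μ0 (fun _ => π t x0) (fun G => f x0 G)
              + envLawMF μ0 μ00 P0 π t x0 *
                (empExp N μ0 (fun _ => π t x0) (fun G => f x0 G) -
                  f x0 (jointG μ0 (π t x0)))) := by
        rw [← Finset.sum_sub_distrib]
        exact Finset.sum_congr rfl fun x0 _ => by ring
      rw [hrw]
      calc |∑ x0 : X0,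
            ((envLawN N μ0 μ00 P0 (fun _ => π) t x0 - envLawMF μ0 μ00 P0 π t x0) *
                empExp N μ0 (fun _ => π t x0) (fun G => f x0 G)
              + envLawMF μ0 μ00 P0 π t x0 *
                (empExp N μ0 (fun _ => π t x0) (fun G => f x0 G) -
                  f x0 (jointG μ0 (π t x0))))|
          ≤ ∑ x0 : X0,
            (|envLawN N μ0 μ00 P0 (fun _ => π) t x0 - envLawMF μ0 μ00 P0 π t x0| * C'
              + envLawMF μ0 μ00 P0 π t x0 * (ε / 4)) := by
            refine le_trans (Finset.abs_sum_le_sum_abs _ _)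
              (Finset.sum_le_sum fun x0 _ => le_trans (abs_add_le _ _) ?_)
            rw [abs_mul, abs_mul, abs_of_nonneg (envLawMF_nonneg μ0 μ00 P0 π t x0)]
            refine add_le_add ?_ ?_
            · exact mul_le_mul_of_nonneg_left
                (empExp_abs_le N μ0 (π t x0) (f x0) (hfb' x0)) (abs_nonneg _)
            · exact mul_le_mul_of_nonneg_left (hb2 x0 (π t x0))
                (envLawMF_nonneg μ0 μ00 P0 π t x0)
        _ = (∑ x0 : X0, |envLawN N μ0 μ00 P0 (fun _ => π) t x0 -
              envLawMF μ0 μ00 P0 π t x0|) * C'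
            + (∑ x0 : X0, envLawMF μ0 μ00 P0 π t x0) * (ε / 4) := by
            rw [Finset.sum_add_distrib, Finset.sum_mul, Finset.sum_mul]
        _ ≤ (ε / (4 * (C' + 1))) * C' + 1 * (ε / 4) := by
            rw [envLawMF_sum]
            exact add_le_add (mul_le_mul_of_nonneg_right (hb1 π) hC'0) le_rfl
        _ = C' * (ε / (4 * (C' + 1))) + ε / 4 := by ring
    have hsmall : C' * (ε / (4 * (C' + 1))) ≤ ε / 4 := by
      have h4 : (0 : ℝ) < 4 * (C' + 1) := by linarith
      rw [← mul_div_assoc, div_le_div_iff₀ h4 (by norm_num : (0 : ℝ) < 4)]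
      nlinarith
    linarith
  have hbdd : BddAbove (Set.range fun π : ℕ → X0 → X → ↥(stdSimplex ℝ U) =>
      |(∑ x0 : X0, envLawN N μ0 μ00 P0 (fun _ => π) t x0 *
          empExp N μ0 (fun _ => π t x0) (fun G => f x0 G)) -
        ∑ x0 : X0, envLawMF μ0 μ00 P0 π t x0 * f x0 (jointG μ0 (π t x0))|) := by
    refine ⟨ε / 2, ?_⟩
    rintro x ⟨π, rfl⟩
    exact hub π
  have hsup_le : (⨆ π : ℕ → X0 → X → ↥(stdSimplex ℝ U),
      |(∑ x0 : X0, envLawN N μ0 μ00 P0 (fun _ => π) t x0 *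
          empExp N μ0 (fun _ => π t x0) (fun G => f x0 G)) -
        ∑ x0 : X0, envLawMF μ0 μ00 P0 π t x0 * f x0 (jointG μ0 (π t x0))|) ≤ ε / 2 :=
    ciSup_le hub
  have hsup_0 : 0 ≤ ⨆ π : ℕ → X0 → X → ↥(stdSimplex ℝ U),
      |(∑ x0 : X0, envLawN N μ0 μ00 P0 (fun _ => π) t x0 *
          empExp N μ0 (fun _ => π t x0) (fun G => f x0 G)) -
        ∑ x0 : X0, envLawMF μ0 μ00 P0 π t x0 * f x0 (jointG μ0 (π t x0))| :=
    le_trans (abs_nonneg _) (le_ciSup hbdd (Classical.arbitrary _))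
  rw [Real.dist_eq, sub_zero, abs_of_nonneg hsup_0]
  linarith
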